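/- (Linear transformations by nonnegative matrices.) Let Z = (Z_1,…,Z_D) be a standard MGP random vector, Z_j = E + S_j. Let σ ∈ (0,∞)^D, let ξ ∈ ℝ be a common shape parameter, and define Y_j = σ_j(exp(ξ Z_j) − 1)/ξ (interpreted as σ_j Z_j when ξ = 0). Let A = (a_{ij}) be an m × D matrix with nonnegative entries such that (Aσ)_i = Σ_j a_{ij} σ_j > 0 for every i = 1,…,m. Put W_i = Σ_j a_{ij} Y_j. Then the event A* = {∃ i : W_i > 0} has positive probability; on A* the quantities Z'_i = ξ^{-1} log(1 + ξ W_i/(Aσ)_i) (= W_i/(Aσ)_i when ξ = 0) are well defined, Z'_i = E + ρ_i with ρ_i = ξ^{-1} log( Σ_j a_{ij} σ_j exp(ξ S_j) / (Aσ)_i ) ≤ 0 independent of E, and conditionally on A* the random variable M' = max_i Z'_i is unit-exponential and independent of the vector (Z'_1 − M', …, Z'_m − M'). In other words, the conditional distribution of A·Y given A·Y ≰ 0 is multivariate generalized Pareto with scale vector A·σ and common shape ξ. -/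

import Mathlib

open MeasureTheory ProbabilityTheory

/-- The marginal transformation `z ↦ σ (exp (ξ z) − 1)/ξ`, interpreted as `σ z` when
`ξ = 0`. -/
noncomputable def gpScale (σ ξ z : ℝ) : ℝ :=
  if ξ = 0 then σ * z else σ * (Real.exp (ξ * z) - 1) / ξ

noncomputable def rFun {D m : ℕ} (A : Fin m → Fin D → ℝ) (σ : Fin D → ℝ) (ξ : ℝ)
    (s : Fin D → ℝ) (i : Fin m) : ℝ :=
  if ξ = 0 then (∑ j, A i j * σ j * s j) / ∑ j, A i j * σ j
  else Real.log ((∑ j, A i j * σ j * Real.exp (ξ * s j)) / ∑ j, A i j * σ j) / ξ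

lemma rFun_measurable {D m : ℕ} (A : Fin m → Fin D → ℝ) (σ : Fin D → ℝ) (ξ : ℝ) (i : Fin m) :
    Measurable (fun s : Fin D → ℝ => rFun A σ ξ s i) := by
  unfold rFun
  split_ifs with h
  · exact (Finset.measurable_sum _ fun j _ =>
      (by fun_prop : Measurable fun s : Fin D → ℝ => A i j * σ j * s j)).div_const _
  · exact (Real.measurable_log.comp ((Finset.measurable_sum _ fun j _ =>
      (((by fun_prop : Measurable fun s : Fin D → ℝ => ξ * s j)).exp).const_mul (A i j * σ j)).div_const _)).div_const _

lemma add_ciSup_fin {m : ℕ} [Nonempty (Fin m)] (c : ℝ) (f : Fin m → ℝ) :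
    (⨆ i, (c + f i)) = c + ⨆ i, f i := by
  apply le_antisymm
  · exact ciSup_le fun i =>
      add_le_add_right (le_ciSup (Set.Finite.bddAbove (Set.finite_range f)) i) c
  · have h : ∀ i, f i ≤ (⨆ i, (c + f i)) - c := fun i =>
      le_sub_iff_add_le'.mpr (le_ciSup (Set.Finite.bddAbove (Set.finite_range (fun i => c + f i))) i)
    have h2 := ciSup_le h
    linarith
lemma core_meas {Ω : Type*} [MeasureSpace Ω] [IsProbabilityMeasure (ℙ : Measure Ω)]
    {D : ℕ} (E : Ω → ℝ) (S : Ω → Fin D → ℝ)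
    (hE : Measurable E) (hS : Measurable S)
    (hEexp : ∀ t : ℝ, 0 ≤ t → ℙ {ω | t < E ω} = ENNReal.ofReal (Real.exp (-t)))
    (hindep : IndepFun E S ℙ)
    (v : (Fin D → ℝ) → ℝ) (hv : Measurable v)
    (hv0 : ∀ᵐ s ∂(Measure.map S ℙ), 0 ≤ v s)
    (B : Set (Fin D → ℝ)) (hB : MeasurableSet B) (t : ℝ) (ht : 0 ≤ t) :
    ℙ ({ω | t + v (S ω) < E ω} ∩ S ⁻¹' B)
      = ENNReal.ofReal (Real.exp (-t))
        * ∫⁻ s in B, ENNReal.ofReal (Real.exp (-(v s))) ∂(Measure.map S ℙ) := by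
  have hmapE : ∀ u : ℝ, 0 ≤ u →
      (Measure.map E ℙ) (Set.Ioi u) = ENNReal.ofReal (Real.exp (-u)) := by
    intro u hu
    rw [Measure.map_apply hE measurableSet_Ioi]
    exact hEexp u hu
  have hprod : Measure.map (fun ω => (S ω, E ω)) ℙ = (Measure.map S ℙ).prod (Measure.map E ℙ) :=
    (indepFun_iff_map_prod_eq_prod_map_map hS.aemeasurable hE.aemeasurable).mp hindep.symm
  set C : Set ((Fin D → ℝ) × ℝ) := {p | p.1 ∈ B ∧ t + v p.1 < p.2} with hC
  have hCmeas : MeasurableSet C :=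
    (hB.preimage measurable_fst).inter
      (measurableSet_lt (measurable_const.add (hv.comp measurable_fst)) measurable_snd)
  have hset : {ω | t + v (S ω) < E ω} ∩ S ⁻¹' B = (fun ω => (S ω, E ω)) ⁻¹' C := by
    ext ω; simp [hC, Set.mem_setOf_eq, and_comm]
  rw [hset, ← Measure.map_apply (hS.prodMk hE) hCmeas, hprod, Measure.prod_apply hCmeas]
  have hfun : (fun s => (Measure.map E ℙ) (Prod.mk s ⁻¹' C))
      = B.indicator (fun s => (Measure.map E ℙ) (Set.Ioi (t + v s))) := by
    funext s
    by_cases hs : s ∈ B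
    · have h1 : Prod.mk s ⁻¹' C = Set.Ioi (t + v s) := by
        ext x; simp [hC, hs, Set.mem_Ioi]
      rw [h1, Set.indicator_of_mem hs]
    · have h1 : Prod.mk s ⁻¹' C = ∅ := by
        ext x; simp [hC, hs]
      rw [h1, Set.indicator_of_notMem hs]; simp
  have hstep : ∫⁻ s, (Measure.map E ℙ) (Prod.mk s ⁻¹' C) ∂(Measure.map S ℙ)
      = ∫⁻ s in B, (Measure.map E ℙ) (Set.Ioi (t + v s)) ∂(Measure.map S ℙ) := by
    rw [← lintegral_indicator hB _]
    exact lintegral_congr fun s => congrFun hfun s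
  rw [hstep]
  have hae : ∀ᵐ s ∂((Measure.map S ℙ).restrict B),
      (Measure.map E ℙ) (Set.Ioi (t + v s))
        = ENNReal.ofReal (Real.exp (-t)) * ENNReal.ofReal (Real.exp (-(v s))) := by
    filter_upwards [ae_restrict_of_ae hv0] with s hs
    rw [hmapE _ (by linarith), show -(t + v s) = -t + -(v s) by ring, Real.exp_add,
      ENNReal.ofReal_mul (Real.exp_nonneg _)]
  rw [lintegral_congr_ae hae, lintegral_const_mul' _ _ ENNReal.ofReal_ne_top]


/-- Linear transformations of an MGP vector (common shape `ξ`, scales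
`σ`) by a nonnegative `m × D` matrix `A` with `(Aσ)ᵢ > 0`. With `Wᵢ = Σⱼ Aᵢⱼ Yⱼ`, the
event `A* = {∃ i, Wᵢ > 0}` has positive probability; on `A*`,
`Z'ᵢ = ξ⁻¹ log (1 + ξ Wᵢ/(Aσ)ᵢ)` (`= Wᵢ/(Aσ)ᵢ` when `ξ = 0`) satisfies `Z'ᵢ = E + ρᵢ`
with `ρᵢ = ξ⁻¹ log (Σⱼ Aᵢⱼ σⱼ exp (ξ Sⱼ)/(Aσ)ᵢ) ≤ 0` independent of `E`; and
conditionally on `A*`, `M' = maxᵢ Z'ᵢ` is unit-exponential and independent of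
`(Z'ᵢ − M')ᵢ`: the conditional law of `A·Y` given `A·Y ≰ 0` is MGP with scale `A·σ`
and common shape `ξ`. -/
theorem stmt_9
    {Ω : Type*} [MeasureSpace Ω] [IsProbabilityMeasure (ℙ : Measure Ω)]
    {D m : ℕ} (hD : 0 < D) (hm : 0 < m)
    (E : Ω → ℝ) (S : Ω → Fin D → ℝ)
    (hEmeas : Measurable E) (hSmeas : Measurable S)
    (hEexp : ∀ t : ℝ, 0 ≤ t → ℙ {ω | t < E ω} = ENNReal.ofReal (Real.exp (-t)))
    (hindep : IndepFun E S ℙ)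
    (hSle : ∀ j, ∀ᵐ ω ∂ℙ, S ω j ≤ 0)
    (hSmax : ∀ᵐ ω ∂ℙ, (⨆ j, S ω j) = 0)
    (σ : Fin D → ℝ) (hσ : ∀ j, 0 < σ j) (ξ : ℝ)
    (Y : Ω → Fin D → ℝ) (hY : ∀ ω j, Y ω j = gpScale (σ j) ξ (E ω + S ω j))
    (A : Fin m → Fin D → ℝ) (hA : ∀ i j, 0 ≤ A i j)
    (hAσ : ∀ i, 0 < ∑ j, A i j * σ j)
    (W : Ω → Fin m → ℝ) (hW : ∀ ω i, W ω i = ∑ j, A i j * Y ω j)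
    (Astar : Set Ω) (hAstar : Astar = {ω | ∃ i, 0 < W ω i})
    (Z' : Ω → Fin m → ℝ)
    (hZ' : ∀ ω i, Z' ω i =
      if ξ = 0 then W ω i / ∑ j, A i j * σ j
      else Real.log (1 + ξ * W ω i / ∑ j, A i j * σ j) / ξ)
    (ρ : Ω → Fin m → ℝ)
    (hρ : ∀ ω i, ρ ω i =
      if ξ = 0 then (∑ j, A i j * σ j * S ω j) / ∑ j, A i j * σ j
      else Real.log ((∑ j, A i j * σ j * Real.exp (ξ * S ω j)) / ∑ j, A i j * σ j) / ξ)
    (M' : Ω → ℝ) (hM' : ∀ ω, M' ω = ⨆ i, Z' ω i) :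
    0 < ℙ Astar
    ∧ (∀ ω ∈ Astar, ∀ i, Z' ω i = E ω + ρ ω i)
    ∧ (∀ i, ∀ᵐ ω ∂ℙ, ρ ω i ≤ 0)
    ∧ IndepFun E ρ ℙ
    ∧ (∀ t : ℝ, 0 ≤ t → ℙ[{ω | t < M' ω} | Astar] = ENNReal.ofReal (Real.exp (-t)))
    ∧ IndepFun M' (fun ω => fun i => Z' ω i - M' ω) (ℙ[|Astar]) := by
  haveI : Nonempty (Fin m) := ⟨⟨0, hm⟩⟩
  haveI : Nonempty (Fin D) := ⟨⟨0, hD⟩⟩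
  -- positivity of the exponential sums
  have hKpos : ∀ (x : Fin D → ℝ) (i : Fin m),
      0 < ∑ j, A i j * σ j * Real.exp (ξ * x j) := by
    intro x i
    obtain ⟨j0, hj0⟩ : ∃ j, 0 < A i j * σ j := by
      by_contra h
      push_neg at h
      have h1 : (∑ j, A i j * σ j) ≤ 0 := Finset.sum_nonpos fun j _ => h j
      linarith [hAσ i]
    refine Finset.sum_pos' (fun j _ => ?_) ⟨j0, Finset.mem_univ _, ?_⟩
    · exact mul_nonneg (mul_nonneg (hA i j) (hσ j).le) (Real.exp_nonneg _)
    · exact mul_pos hj0 (Real.exp_pos _)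
  -- the shifted argument of the log
  have harg : ξ ≠ 0 → ∀ ω i, 1 + ξ * W ω i / (∑ j, A i j * σ j)
      = Real.exp (ξ * E ω) * ((∑ j, A i j * σ j * Real.exp (ξ * S ω j)) / ∑ j, A i j * σ j) := by
    intro hξ ω i
    have hc := hAσ i
    have hξW : ξ * W ω i
        = Real.exp (ξ * E ω) * (∑ j, A i j * σ j * Real.exp (ξ * S ω j)) - ∑ j, A i j * σ j := by
      rw [hW, Finset.mul_sum]
      have h1 : ∀ j, ξ * (A i j * Y ω j)
          = A i j * σ j * Real.exp (ξ * E ω) * Real.exp (ξ * S ω j) - A i j * σ j := by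
        intro j
        rw [hY, gpScale, if_neg hξ,
          show ξ * (E ω + S ω j) = ξ * E ω + ξ * S ω j by ring, Real.exp_add]
        field_simp
      rw [Finset.sum_congr rfl fun j _ => h1 j, Finset.sum_sub_distrib]
      congr 1
      rw [Finset.mul_sum]
      exact Finset.sum_congr rfl fun j _ => by ring
    rw [hξW]
    field_simp
    ring
  -- Z' = E + ρ pointwise
  have hZE : ∀ ω i, Z' ω i = E ω + ρ ω i := by
    intro ω i
    rw [hZ', hρ]
    by_cases hξ : ξ = 0
    · simp only [if_pos hξ]
      have hc := hAσ i
      have hWe : W ω i = (∑ j, A i j * σ j) * E ω + ∑ j, A i j * σ j * S ω j := by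
        rw [hW]
        have h1 : ∀ j, A i j * Y ω j = A i j * σ j * E ω + A i j * σ j * S ω j := by
          intro j; rw [hY, gpScale, if_pos hξ]; ring
        rw [Finset.sum_congr rfl fun j _ => h1 j, Finset.sum_add_distrib]
        congr 1
        rw [Finset.sum_mul]
      rw [hWe, add_div, mul_comm, mul_div_assoc, div_self (ne_of_gt hc), mul_one]
    · simp only [if_neg hξ]
      have hc := hAσ i
      have hK := hKpos (S ω) i
      rw [harg hξ ω i, Real.log_mul (Real.exp_ne_zero _) (ne_of_gt (div_pos hK hc)),
        Real.log_exp, add_div, mul_div_cancel_left₀ _ hξ]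
  -- sign equivalence
  have hWZpos : ∀ ω i, (0 < W ω i ↔ 0 < Z' ω i) := by
    intro ω i
    have hc := hAσ i
    rw [hZ']
    by_cases hξ : ξ = 0
    · simp only [if_pos hξ]
      constructor
      · intro h; exact div_pos h hc
      · intro h
        have h2 := mul_pos h hc
        rwa [div_mul_cancel₀ _ (ne_of_gt hc)] at h2
    · simp only [if_neg hξ]
      have hK := hKpos (S ω) i
      have hu : 0 < 1 + ξ * W ω i / (∑ j, A i j * σ j) := by
        rw [harg hξ ω i]; positivity
      rcases lt_or_gt_of_ne hξ with hneg | hpos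
      · constructor
        · intro hw
          have h1 : ξ * W ω i / (∑ j, A i j * σ j) < 0 :=
            div_neg_of_neg_of_pos (mul_neg_of_neg_of_pos hneg hw) hc
          have h2 : Real.log (1 + ξ * W ω i / (∑ j, A i j * σ j)) < 0 :=
            Real.log_neg hu (by linarith)
          exact div_pos_of_neg_of_neg h2 hneg
        · intro hz
          have h2 : Real.log (1 + ξ * W ω i / (∑ j, A i j * σ j)) < 0 := by
            by_contra hcon
            push_neg at hcon
            have : Real.log (1 + ξ * W ω i / (∑ j, A i j * σ j)) / ξ ≤ 0 :=
              div_nonpos_of_nonneg_of_nonpos hcon hneg.le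
            linarith
          have h3 : 1 + ξ * W ω i / (∑ j, A i j * σ j) < 1 := (Real.log_neg_iff hu).mp h2
          have h4 : ξ * W ω i / (∑ j, A i j * σ j) < 0 := by linarith
          have h5 : ξ * W ω i < 0 := by
            have h6 := mul_neg_of_neg_of_pos h4 hc
            rwa [div_mul_cancel₀ _ (ne_of_gt hc)] at h6
          nlinarith
      · constructor
        · intro hw
          have h1 : 0 < ξ * W ω i / (∑ j, A i j * σ j) :=
            div_pos (mul_pos hpos hw) hc
          have h2 : 0 < Real.log (1 + ξ * W ω i / (∑ j, A i j * σ j)) :=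
            Real.log_pos (by linarith)
          exact div_pos h2 hpos
        · intro hz
          have h2 : 0 < Real.log (1 + ξ * W ω i / (∑ j, A i j * σ j)) := by
            by_contra hcon
            push_neg at hcon
            have : Real.log (1 + ξ * W ω i / (∑ j, A i j * σ j)) / ξ ≤ 0 :=
              div_nonpos_of_nonpos_of_nonneg hcon hpos.le
            linarith
          have h3 : 1 < 1 + ξ * W ω i / (∑ j, A i j * σ j) := by
            by_contra hcon
            push_neg at hcon
            have := Real.log_nonpos (by linarith) hcon
            linarith
          have h4 : 0 < ξ * W ω i / (∑ j, A i j * σ j) := by linarith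
          have h5 : 0 < ξ * W ω i := by
            have h6 := mul_pos h4 hc
            rwa [div_mul_cancel₀ _ (ne_of_gt hc)] at h6
          nlinarith
  -- ρ as a function of S
  have hρr : ∀ ω, ρ ω = rFun A σ ξ (S ω) := by
    intro ω; funext i; rw [hρ]; rfl
  -- ρ nonpositive pointwise when S is nonpositive
  have hρ_np : ∀ ω, (∀ j, S ω j ≤ 0) → ∀ i, ρ ω i ≤ 0 := by
    intro ω hω i
    have hc := hAσ i
    rw [hρ]
    split_ifs with hξ
    · apply div_nonpos_of_nonpos_of_nonneg _ hc.le
      exact Finset.sum_nonpos fun j _ =>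
        mul_nonpos_of_nonneg_of_nonpos (mul_nonneg (hA i j) (hσ j).le) (hω j)
    · have hK := hKpos (S ω) i
      rcases lt_or_gt_of_ne hξ with hneg | hpos
      · have h1 : (∑ j, A i j * σ j) ≤ ∑ j, A i j * σ j * Real.exp (ξ * S ω j) := by
          apply Finset.sum_le_sum
          intro j _
          have : 1 ≤ Real.exp (ξ * S ω j) :=
            Real.one_le_exp (by nlinarith [hω j])
          nlinarith [mul_nonneg (hA i j) (hσ j).le]
        have h2 : 0 ≤ Real.log ((∑ j, A i j * σ j * Real.exp (ξ * S ω j)) / ∑ j, A i j * σ j) :=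
          Real.log_nonneg ((one_le_div hc).mpr h1)
        exact div_nonpos_of_nonneg_of_nonpos h2 hneg.le
      · have h1 : (∑ j, A i j * σ j * Real.exp (ξ * S ω j)) ≤ ∑ j, A i j * σ j := by
          apply Finset.sum_le_sum
          intro j _
          have : Real.exp (ξ * S ω j) ≤ 1 :=
            Real.exp_le_one_iff.mpr (mul_nonpos_of_nonneg_of_nonpos hpos.le (hω j))
          nlinarith [mul_nonneg (hA i j) (hσ j).le]
        have h2 : Real.log ((∑ j, A i j * σ j * Real.exp (ξ * S ω j)) / ∑ j, A i j * σ j) ≤ 0 :=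
          Real.log_nonpos (by positivity) ((div_le_one hc).mpr h1)
        exact div_nonpos_of_nonpos_of_nonneg h2 hpos.le
  have hS0 : ∀ᵐ ω ∂ℙ, ∀ j, S ω j ≤ 0 := ae_all_iff.mpr hSle
  -- part 3
  have part3 : ∀ i, ∀ᵐ ω ∂ℙ, ρ ω i ≤ 0 := fun i =>
    hS0.mono fun ω hω => hρ_np ω hω i
  -- part 4
  have part4 : IndepFun E ρ ℙ := by
    have hρeq : ρ = fun ω => rFun A σ ξ (S ω) := funext hρr
    rw [hρeq]
    exact hindep.comp measurable_id (measurable_pi_lambda _ (rFun_measurable A σ ξ))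
  -- the function v
  set v : (Fin D → ℝ) → ℝ := fun s => -⨆ i, rFun A σ ξ s i with hvdef
  have hv_meas : Measurable v :=
    (Measurable.iSup (fun i => rFun_measurable A σ ξ i)).neg
  -- M' = E + sup ρ
  have hM'E : ∀ ω, M' ω = E ω + ⨆ i, ρ ω i := by
    intro ω
    rw [hM']
    rw [iSup_congr (hZE ω)]
    exact add_ciSup_fin _ _
  have hM'meas : Measurable M' := by
    have h1 : M' = fun ω => E ω + ⨆ i, rFun A σ ξ (S ω) i := by
      funext ω; rw [hM'E, hρr]
    rw [h1]
    exact hEmeas.add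
      (Measurable.iSup fun i => (rFun_measurable A σ ξ i).comp hSmeas)
  have hvS : ∀ ω, v (S ω) = -⨆ i, ρ ω i := by
    intro ω; rw [hρr]
  -- sets
  have hMt : ∀ t : ℝ, {ω | t < M' ω} = {ω | t + v (S ω) < E ω} := by
    intro t
    ext ω
    simp only [Set.mem_setOf_eq, hM'E, hvS]
    constructor <;> intro h <;> linarith
  have hAeqM : Astar = {ω | 0 < M' ω} := by
    rw [hAstar]
    ext ω
    simp only [Set.mem_setOf_eq, hM']
    constructor
    · rintro ⟨i, hi⟩
      exact lt_of_lt_of_le ((hWZpos ω i).mp hi)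
        (le_ciSup (Set.Finite.bddAbove (Set.finite_range _)) i)
    · intro h
      obtain ⟨i, hi⟩ := (lt_ciSup_iff (Set.Finite.bddAbove (Set.finite_range _))).mp h
      exact ⟨i, (hWZpos ω i).mpr hi⟩
  have hAmeas : MeasurableSet Astar := by
    rw [hAeqM]
    exact measurableSet_lt measurable_const hM'meas
  -- v nonneg a.e.
  have hv0Ω : ∀ᵐ ω ∂ℙ, 0 ≤ v (S ω) := by
    filter_upwards [hS0] with ω hω
    rw [hvS]
    have h1 : (⨆ i, ρ ω i) ≤ 0 := ciSup_le fun i => hρ_np ω hω i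
    linarith
  have hv0S : ∀ᵐ s ∂(Measure.map S ℙ), 0 ≤ v s := by
    rw [ae_map_iff hSmeas.aemeasurable (measurableSet_le measurable_const hv_meas)]
    exact hv0Ω
  -- the key measure computation
  have KEY : ∀ (B : Set (Fin D → ℝ)), MeasurableSet B → ∀ t : ℝ, 0 ≤ t →
      ℙ ({ω | t < M' ω} ∩ S ⁻¹' B)
        = ENNReal.ofReal (Real.exp (-t))
          * ∫⁻ s in B, ENNReal.ofReal (Real.exp (-(v s))) ∂(Measure.map S ℙ) := by
    intro B hB t ht
    rw [hMt t]
    exact core_meas E S hEmeas hSmeas hEexp hindep v hv_meas hv0S B hB t ht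
  set I : ENNReal := ∫⁻ s, ENNReal.ofReal (Real.exp (-(v s))) ∂(Measure.map S ℙ) with hIdef
  have hPA : ℙ Astar = I := by
    have h1 := KEY Set.univ MeasurableSet.univ 0 le_rfl
    simp only [Set.preimage_univ, Set.inter_univ, neg_zero, Real.exp_zero,
      ENNReal.ofReal_one, one_mul, Measure.restrict_univ] at h1
    rw [hAeqM, h1]
  have hIne0 : I ≠ 0 := by
    intro h0
    have hmeas : Measurable fun s => ENNReal.ofReal (Real.exp (-(v s))) :=
      ENNReal.measurable_ofReal.comp (Real.measurable_exp.comp hv_meas.neg)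
    rw [hIdef, lintegral_eq_zero_iff hmeas] at h0
    haveI : IsProbabilityMeasure (Measure.map S ℙ) :=
      Measure.isProbabilityMeasure_map hSmeas.aemeasurable
    haveI : (ae (Measure.map S ℙ)).NeBot := ae_neBot.mpr (IsProbabilityMeasure.ne_zero _)
    obtain ⟨s, hs⟩ := h0.exists
    simp only [Pi.zero_apply, ENNReal.ofReal_eq_zero] at hs
    exact absurd hs (not_le.mpr (Real.exp_pos _))
  have hItop : I ≠ ⊤ := by
    intro h
    rw [← hPA] at h
    exact (measure_ne_top ℙ Astar) h
  -- part 1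
  have part1 : 0 < ℙ Astar := by
    rw [hPA]
    exact pos_iff_ne_zero.mpr hIne0
  -- part 5
  have part5 : ∀ t : ℝ, 0 ≤ t →
      ℙ[{ω | t < M' ω} | Astar] = ENNReal.ofReal (Real.exp (-t)) := by
    intro t ht
    rw [cond_apply hAmeas]
    have hsub : Astar ∩ {ω | t < M' ω} = {ω | t < M' ω} := by
      apply Set.inter_eq_self_of_subset_right
      rw [hAeqM]
      intro ω hω
      exact lt_of_le_of_lt ht hω
    have h1 := KEY Set.univ MeasurableSet.univ t ht
    simp only [Set.preimage_univ, Set.inter_univ, Measure.restrict_univ] at h1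
    rw [hsub, h1, ← hIdef, hPA, mul_comm (ENNReal.ofReal _) I, ← mul_assoc,
      ENNReal.inv_mul_cancel hIne0 hItop, one_mul]
  refine ⟨part1, fun ω _ i => hZE ω i, part3, part4, part5, ?_⟩
  -- part 6
  have hPAI : ℙ Astar ≠ 0 := by rw [hPA]; exact hIne0
  haveI hprob : IsProbabilityMeasure (ℙ[|Astar]) := cond_isProbabilityMeasure hPAI
  set g : (Fin D → ℝ) → Fin m → ℝ :=
    fun s i => rFun A σ ξ s i - ⨆ i', rFun A σ ξ s i' with hgdef
  have hg_meas : Measurable g := measurable_pi_lambda _ fun i =>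
    (rFun_measurable A σ ξ i).sub (Measurable.iSup fun i' => rFun_measurable A σ ξ i')
  have hT : (fun ω => fun i => Z' ω i - M' ω) = fun ω => g (S ω) := by
    funext ω i
    have h0 := hρr ω
    simp only [hgdef, ← h0, hZE ω i, hM'E ω]
    ring
  rw [hT]
  rw [indepFun_iff_measure_inter_preimage_eq_mul]
  intro s B hs hB
  set B' : Set (Fin D → ℝ) := g ⁻¹' B with hB'def
  have hB' : MeasurableSet B' := hg_meas hB
  have hpre : (fun ω => g (S ω)) ⁻¹' B = S ⁻¹' B' := rfl
  rw [hpre]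
  set J : ENNReal := ∫⁻ s in B', ENNReal.ofReal (Real.exp (-(v s))) ∂(Measure.map S ℙ) with hJdef
  have hPB : ℙ (Astar ∩ S ⁻¹' B') = J := by
    have h1 := KEY B' hB' 0 le_rfl
    simp only [neg_zero, Real.exp_zero, ENNReal.ofReal_one, one_mul] at h1
    rw [hAeqM]
    exact h1
  have hray : ∀ t : ℝ, (ℙ[|Astar]) (M' ⁻¹' Set.Ioi t ∩ S ⁻¹' B')
      = (ℙ[|Astar]) (M' ⁻¹' Set.Ioi t) * (ℙ[|Astar]) (S ⁻¹' B') := by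
    intro t
    have hIoi : M' ⁻¹' Set.Ioi t = {ω | t < M' ω} := rfl
    rw [cond_apply hAmeas, cond_apply hAmeas, cond_apply hAmeas, hIoi]
    rcases le_or_gt 0 t with ht | ht
    · have hsub : {ω | t < M' ω} ⊆ Astar := by
        rw [hAeqM]; intro ω hω; exact lt_of_le_of_lt ht hω
      have h2 : Astar ∩ ({ω | t < M' ω} ∩ S ⁻¹' B') = {ω | t < M' ω} ∩ S ⁻¹' B' :=
        Set.inter_eq_self_of_subset_right (Set.Subset.trans Set.inter_subset_left hsub)
      have h3 : Astar ∩ {ω | t < M' ω} = {ω | t < M' ω} :=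
        Set.inter_eq_self_of_subset_right hsub
      have h4 := KEY Set.univ MeasurableSet.univ t ht
      simp only [Set.preimage_univ, Set.inter_univ, Measure.restrict_univ] at h4
      rw [h2, h3, KEY B' hB' t ht, ← hJdef, hPB, h4, ← hIdef, hPA]
      have hc1 : I⁻¹ * (ENNReal.ofReal (Real.exp (-t)) * I) = ENNReal.ofReal (Real.exp (-t)) := by
        rw [mul_comm (ENNReal.ofReal _) I, ← mul_assoc, ENNReal.inv_mul_cancel hIne0 hItop,
          one_mul]
      rw [hc1]
      ring
    · have hsub : Astar ⊆ {ω | t < M' ω} := by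
        rw [hAeqM]; intro ω hω; exact lt_trans ht hω
      have h2 : Astar ∩ ({ω | t < M' ω} ∩ S ⁻¹' B') = Astar ∩ S ⁻¹' B' := by
        rw [← Set.inter_assoc, Set.inter_eq_self_of_subset_left hsub]
      have h3 : Astar ∩ {ω | t < M' ω} = Astar := Set.inter_eq_self_of_subset_left hsub
      rw [h2, h3, hPA, ENNReal.inv_mul_cancel hIne0 hItop, one_mul]
  set μc := ℙ[|Astar] with hμc
  set ν₁ : Measure ℝ := Measure.map M' (μc.restrict (S ⁻¹' B')) with hν₁
  set ν₂ : Measure ℝ := μc (S ⁻¹' B') • Measure.map M' μc with hν₂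
  haveI : IsFiniteMeasure ν₁ := by
    constructor
    rw [hν₁, Measure.map_apply hM'meas MeasurableSet.univ, Set.preimage_univ,
      Measure.restrict_apply MeasurableSet.univ, Set.univ_inter]
    exact lt_of_le_of_lt prob_le_one ENNReal.one_lt_top
  haveI : IsFiniteMeasure ν₂ := by
    constructor
    rw [hν₂, Measure.smul_apply, smul_eq_mul, Measure.map_apply hM'meas MeasurableSet.univ,
      Set.preimage_univ, measure_univ, mul_one]
    exact lt_of_le_of_lt prob_le_one ENNReal.one_lt_top
  have hext : ν₁ = ν₂ := by
    refine ext_of_generate_finite (Set.range Set.Ioi) ?_ isPiSystem_Ioi ?_ ?_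
    · exact (BorelSpace.measurable_eq (α := ℝ)).trans (borel_eq_generateFrom_Ioi ℝ)
    · rintro u ⟨t, rfl⟩
      rw [hν₁, hν₂, Measure.map_apply hM'meas measurableSet_Ioi,
        Measure.restrict_apply (hM'meas measurableSet_Ioi), Measure.smul_apply,
        Measure.map_apply hM'meas measurableSet_Ioi, smul_eq_mul, mul_comm]
      exact hray t
    · rw [hν₁, hν₂, Measure.map_apply hM'meas MeasurableSet.univ, Set.preimage_univ,
        Measure.restrict_apply MeasurableSet.univ, Set.univ_inter, Measure.smul_apply,
        Measure.map_apply hM'meas MeasurableSet.univ, Set.preimage_univ, measure_univ,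
        smul_eq_mul, mul_one]
  calc μc (M' ⁻¹' s ∩ S ⁻¹' B') = ν₁ s := by
        rw [hν₁, Measure.map_apply hM'meas hs, Measure.restrict_apply (hM'meas hs)]
    _ = ν₂ s := by rw [hext]
    _ = μc (M' ⁻¹' s) * μc (S ⁻¹' B') := by
        rw [hν₂, Measure.smul_apply, Measure.map_apply hM'meas hs, smul_eq_mul, mul_comm]
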